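/- Let y > 0 and a' ≥ 0 be real numbers, and let γ : ℝ → ℍ be the path γ(t) = t + y·i into the upper half-plane. Then the length of γ over [0, a'], measured as the metric variation eVariationOn γ (Set.Icc 0 a') with respect to the hyperbolic metric of ℍ, equals ENNReal.ofReal (a' / y). -/

import Mathlib

open scoped UpperHalfPlane

open Real Filter

lemma arsinh_le_self {x : ℝ} (hx : 0 ≤ x) : Real.arsinh x ≤ x := by
  calc Real.arsinh x ≤ Real.arsinh (Real.sinh x) := by
        rw [Real.arsinh_le_arsinh]; exact Real.self_le_sinh_iff.2 hx
    _ = x := Real.arsinh_sinh x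

/-- The hyperbolic length (total metric variation) of the horizontal horocyclic segment
`t ↦ t + y·i`, `t ∈ [0, a']`, at height `y > 0` in the upper half-plane equals `a' / y`. -/
theorem stmt_3 (y : ℝ) (hy : 0 < y) (a' : ℝ) (ha' : 0 ≤ a')
    (γ : ℝ → ℍ) (hγ : ∀ t : ℝ, (γ t : ℂ) = t + y * Complex.I) :
    eVariationOn γ (Set.Icc 0 a') = ENNReal.ofReal (a' / y) := by
  have him : ∀ t : ℝ, (γ t).im = y := fun t => by
    rw [← UpperHalfPlane.coe_im, hγ]; simp
  have hdist : ∀ s t : ℝ, dist (γ s) (γ t) = 2 * Real.arsinh (|s - t| / (2 * y)) := by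
    intro s t
    rw [UpperHalfPlane.dist_eq, him, him, Real.sqrt_mul_self hy.le]
    congr 2
    rw [Complex.dist_eq, hγ, hγ]
    have h : (s : ℂ) + y * Complex.I - ((t : ℂ) + y * Complex.I) = ((s - t : ℝ) : ℂ) := by
      push_cast; ring
    rw [h, Complex.norm_real, Real.norm_eq_abs]
  apply le_antisymm
  · apply iSup_le
    rintro ⟨n, ⟨u, hu, us⟩⟩
    calc ∑ i ∈ Finset.range n, edist (γ (u (i + 1))) (γ (u i))
        ≤ ∑ i ∈ Finset.range n, ENNReal.ofReal ((u (i + 1) - u i) / y) := by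
          refine Finset.sum_le_sum fun i _ => ?_
          rw [edist_dist, hdist]
          apply ENNReal.ofReal_le_ofReal
          have h1 : 0 ≤ u (i + 1) - u i := sub_nonneg.2 (hu (Nat.le_succ i))
          rw [abs_of_nonneg h1]
          have h2 := arsinh_le_self (x := (u (i + 1) - u i) / (2 * y)) (by positivity)
          calc 2 * Real.arsinh ((u (i + 1) - u i) / (2 * y))
              ≤ 2 * ((u (i + 1) - u i) / (2 * y)) := by linarith
            _ = (u (i + 1) - u i) / y := by field_simp
      _ = ENNReal.ofReal (∑ i ∈ Finset.range n, (u (i + 1) - u i) / y) := by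
          rw [ENNReal.ofReal_sum_of_nonneg]
          intro i _
          have h1 : 0 ≤ u (i + 1) - u i := sub_nonneg.2 (hu (Nat.le_succ i))
          positivity
      _ ≤ ENNReal.ofReal (a' / y) := by
          apply ENNReal.ofReal_le_ofReal
          rw [← Finset.sum_div, Finset.sum_range_sub (fun i => u i)]
          gcongr
          have h0 := (us 0).1
          have hn := (us n).2
          linarith
  · rcases eq_or_lt_of_le ha' with rfl | ha
    · simp
    -- lower bound via uniform partitions
    have key : ∀ n : ℕ, n ≠ 0 →
        ENNReal.ofReal ((n : ℝ) * (2 * Real.arsinh (a' / (2 * n * y))))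
          ≤ eVariationOn γ (Set.Icc 0 a') := by
      intro n hn
      have hn' : (0 : ℝ) < n := by positivity
      set δ : ℝ := a' / n with hδ
      have hδ0 : 0 ≤ δ := by positivity
      set u : ℕ → ℝ := fun i => (min i n : ℕ) * δ with hu_def
      have hu : Monotone u := fun i j hij => by
        have : (min i n : ℕ) ≤ min j n := min_le_min hij le_rfl
        exact mul_le_mul_of_nonneg_right (by exact_mod_cast this) hδ0
      have us : ∀ i, u i ∈ Set.Icc 0 a' := by
        intro i
        constructor
        · positivity
        · have h1 : ((min i n : ℕ) : ℝ) ≤ n := by exact_mod_cast min_le_right i n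
          calc ((min i n : ℕ) : ℝ) * δ ≤ n * δ := mul_le_mul_of_nonneg_right h1 hδ0
            _ = a' := by rw [hδ]; field_simp
      have hsum := eVariationOn.sum_le (f := γ) (n := n) hu us
      have hterm : ∀ i ∈ Finset.range n, edist (γ (u (i + 1))) (γ (u i))
          = ENNReal.ofReal (2 * Real.arsinh (a' / (2 * n * y))) := by
        intro i hi
        rw [Finset.mem_range] at hi
        rw [edist_dist, hdist]
        congr 3
        have h1 : min (i + 1) n = i + 1 := min_eq_left (by omega)
        have h2 : min i n = i := min_eq_left (by omega)
        rw [hu_def]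
        simp only [h1, h2]
        push_cast
        rw [show ((i : ℝ) + 1) * δ - i * δ = δ by ring, abs_of_nonneg hδ0, hδ, div_div]
        ring_nf
      rw [Finset.sum_congr rfl hterm, Finset.sum_const, Finset.card_range,
        nsmul_eq_mul] at hsum
      refine le_trans (le_of_eq ?_) hsum
      rw [ENNReal.ofReal_mul (by positivity), ENNReal.ofReal_natCast]
    -- the limit
    have hc : (0 : ℝ) < a' / (2 * y) := by positivity
    set c : ℝ := a' / (2 * y) with hc_def
    have h2 : 2 * c = a' / y := by
      rw [hc_def, eq_div_iff hy.ne']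
      field_simp
    have hEqn : ∀ n : ℕ, a' / (2 * (n : ℝ) * y) = c / n := by
      intro n
      rw [hc_def, div_div]
      ring_nf
    clear_value c
    have hslope : Tendsto (slope Real.arsinh 0) (nhdsWithin 0 {0}ᶜ) (nhds 1) := by
      have := (Real.hasDerivAt_arsinh 0)
      rw [hasDerivAt_iff_tendsto_slope] at this
      simpa using this
    have ht0 : Tendsto (fun n : ℕ => c / n) atTop (nhdsWithin 0 {0}ᶜ) := by
      apply tendsto_nhdsWithin_of_tendsto_nhds_of_eventually_within
      · exact tendsto_const_div_atTop_nhds_zero_nat c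
      · filter_upwards [eventually_ge_atTop 1] with n hn
        have hn' : (0:ℝ) < n := by positivity
        simp only [Set.mem_compl_iff, Set.mem_singleton_iff]
        exact div_ne_zero hc.ne' hn'.ne'
    have hreal : Tendsto (fun n : ℕ => (n : ℝ) * (2 * Real.arsinh (a' / (2 * n * y))))
        atTop (nhds (a' / y)) := by
      have h1 : Tendsto (fun n : ℕ => 2 * c * slope Real.arsinh 0 (c / n)) atTop
          (nhds (2 * c)) := by
        have := (hslope.comp ht0).const_mul (2 * c)
        simpa using this
      rw [h2] at h1
      apply h1.congr'
      filter_upwards [eventually_ge_atTop 1] with n hn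
      have hn' : (0:ℝ) < n := by positivity
      have hcne : c ≠ 0 := hc.ne'
      have hnne : (n : ℝ) ≠ 0 := hn'.ne'
      simp only [hEqn n]
      rw [slope_def_field, Real.arsinh_zero, sub_zero, sub_zero, ← h2]
      field_simp
    have hofReal : Tendsto (fun n : ℕ =>
        ENNReal.ofReal ((n : ℝ) * (2 * Real.arsinh (a' / (2 * n * y)))))
        atTop (nhds (ENNReal.ofReal (a' / y))) :=
      (ENNReal.continuous_ofReal.tendsto _).comp hreal
    refine le_of_tendsto hofReal ?_
    filter_upwards [eventually_ge_atTop 1] with n hn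
    exact key n (by omega)
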